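/- Let ℓ ≥ 2 and let {x,y} be a diagonal pair of the grid graph G_ℓ with d(x,y) > 2, where x = (x1,x2), y = (y1,y2), x1 < y1. Set z = (x1,y2) and z̃ = (y1,x2). Then R(x,y) = V(G_ℓ) \ ( Q3(z) ∪ Q1(z̃) ∪ { (x1+j, y2+j) : 0 < j < y1−x1 } ). -/

import Mathlib

/-- The `a × b` grid graph on `Fin a × Fin b`: two vertices are adjacent iff they
differ by exactly 1 in one coordinate and agree in the other (i.e. their taxicab
distance is 1). -/
def gridGraph (a b : ℕ) : SimpleGraph (Fin a × Fin b) where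
  Adj x y := ((x.1 : ℕ) - y.1) + ((y.1 : ℕ) - x.1) + ((x.2 : ℕ) - y.2) + ((y.2 : ℕ) - x.2) = 1
  symm := ⟨by intro x y h; omega⟩
  loopless := ⟨by intro x h; omega⟩

def taxi {ℓ : ℕ} (u v : Fin ℓ × Fin ℓ) : ℕ :=
  ((u.1 : ℕ) - v.1) + ((v.1 : ℕ) - u.1) + ((u.2 : ℕ) - v.2) + ((v.2 : ℕ) - u.2)

lemma grid_adj_iff {ℓ : ℕ} {u v : Fin ℓ × Fin ℓ} :
    (gridGraph ℓ ℓ).Adj u v ↔ taxi u v = 1 := Iff.rfl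

lemma exists_walk {ℓ : ℕ} (n : ℕ) : ∀ u v : Fin ℓ × Fin ℓ, taxi u v = n →
    ∃ p : (gridGraph ℓ ℓ).Walk u v, p.length = n := by
  induction n with
  | zero =>
    intro u v h
    have : u = v := by
      unfold taxi at h
      exact Prod.ext (Fin.ext (by omega)) (Fin.ext (by omega))
    subst this; exact ⟨.nil, rfl⟩
  | succ n ih =>
    intro u v h
    have hex : ∃ u' : Fin ℓ × Fin ℓ, (gridGraph ℓ ℓ).Adj u u' ∧ taxi u' v = n := by
      unfold taxi at h
      have hv1 := v.1.isLt
      have hv2 := v.2.isLt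
      rcases lt_trichotomy (u.1 : ℕ) (v.1 : ℕ) with h1 | h1 | h1
      · refine ⟨(⟨(u.1 : ℕ) + 1, by omega⟩, u.2), ?_, ?_⟩
        · rw [grid_adj_iff]; unfold taxi; simp only [Fin.val_mk]; omega
        · unfold taxi; simp only [Fin.val_mk]; omega
      · rcases lt_trichotomy (u.2 : ℕ) (v.2 : ℕ) with h2 | h2 | h2
        · refine ⟨(u.1, ⟨(u.2 : ℕ) + 1, by omega⟩), ?_, ?_⟩
          · rw [grid_adj_iff]; unfold taxi; simp only [Fin.val_mk]; omega
          · unfold taxi; simp only [Fin.val_mk]; omega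
        · omega
        · refine ⟨(u.1, ⟨(u.2 : ℕ) - 1, by omega⟩), ?_, ?_⟩
          · rw [grid_adj_iff]; unfold taxi; simp only [Fin.val_mk]; omega
          · unfold taxi; simp only [Fin.val_mk]; omega
      · refine ⟨(⟨(u.1 : ℕ) - 1, by omega⟩, u.2), ?_, ?_⟩
        · rw [grid_adj_iff]; unfold taxi; simp only [Fin.val_mk]; omega
        · unfold taxi; simp only [Fin.val_mk]; omega
    obtain ⟨u', hadj, htaxi⟩ := hex
    obtain ⟨p, hp⟩ := ih u' v htaxi
    exact ⟨.cons hadj p, by simp [hp]⟩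

lemma taxi_le_length {ℓ : ℕ} {u v : Fin ℓ × Fin ℓ} (p : (gridGraph ℓ ℓ).Walk u v) :
    taxi u v ≤ p.length := by
  induction p with
  | nil => unfold taxi; omega
  | cons h p ih =>
    rw [grid_adj_iff] at h
    rw [SimpleGraph.Walk.length_cons]
    unfold taxi at *
    omega

lemma grid_dist_eq {ℓ : ℕ} (u v : Fin ℓ × Fin ℓ) :
    (gridGraph ℓ ℓ).dist u v = taxi u v := by
  obtain ⟨p, hp⟩ := exists_walk (taxi u v) u v rfl
  have hr : (gridGraph ℓ ℓ).Reachable u v := ⟨p⟩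
  refine le_antisymm (hp ▸ SimpleGraph.dist_le p) ?_
  obtain ⟨q, hq⟩ := hr.exists_walk_length_eq_dist
  calc taxi u v ≤ q.length := taxi_le_length q
    _ = _ := hq

/-- for a diagonal pair `{x,y}` of the grid `G_ℓ` with `d(x,y) > 2`,
`R(x,y) = V(G_ℓ) \ (Q₃(z) ∪ Q₁(z̃) ∪ {(x₁+j, y₂+j) : 0 < j < y₁ - x₁})` where
`z = (x₁, y₂)` and `z̃ = (y₁, x₂)`. -/
theorem stmt10 (ℓ : ℕ) (hℓ : 2 ≤ ℓ) (x y : Fin ℓ × Fin ℓ)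
    (hdiag : (x.1 : ℕ) + (x.2 : ℕ) = (y.1 : ℕ) + (y.2 : ℕ)) (hlt : (x.1 : ℕ) < (y.1 : ℕ))
    (hdist : 2 < (gridGraph ℓ ℓ).dist x y) :
    {u : Fin ℓ × Fin ℓ | (gridGraph ℓ ℓ).dist u x ≠ (gridGraph ℓ ℓ).dist u y} =
      Set.univ \
        ({u : Fin ℓ × Fin ℓ | (u.1 : ℕ) ≤ (x.1 : ℕ) ∧ (u.2 : ℕ) ≤ (y.2 : ℕ)} ∪
         {u : Fin ℓ × Fin ℓ | (y.1 : ℕ) ≤ (u.1 : ℕ) ∧ (x.2 : ℕ) ≤ (u.2 : ℕ)} ∪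
         {u : Fin ℓ × Fin ℓ | ∃ j : ℕ, 0 < j ∧ j < (y.1 : ℕ) - (x.1 : ℕ) ∧
            (u.1 : ℕ) = (x.1 : ℕ) + j ∧ (u.2 : ℕ) = (y.2 : ℕ) + j}) := by
  rw [grid_dist_eq] at hdist
  unfold taxi at hdist
  ext u
  simp only [Set.mem_setOf_eq, Set.mem_diff, Set.mem_univ, Set.mem_union, true_and,
    grid_dist_eq]
  unfold taxi
  have hu1 := u.1.isLt
  have hu2 := u.2.isLt
  have hx2 := x.2.isLt
  have hy1 := y.1.isLt
  constructor
  · intro hne hmem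
    apply hne
    rcases hmem with (h | h) | ⟨j, hj1, hj2, hj3, hj4⟩ <;> omega
  · intro hmem
    push_neg at hmem
    obtain ⟨⟨h1, h2⟩, h3⟩ := hmem
    have h4 := h3 ((u.1 : ℕ) - (x.1 : ℕ))
    omega
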